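/- Let U : ℝ^d → ℝ have gradient ξ = ∇U twice continuously differentiable, fix r > 0, and let ζ(t) = (x(t), w(t)) be a differentiable solution on [0,T] of the ODE x'(t) = 2w(t), w'(t) = −2P(x(t))x(t) + 𝐛(x(t),w(t)), such that ξ(x(t)) ≠ 0 for all t ∈ [0,T] and ξ̄(x(0))ᵀw(0) = 0. Then the potential is conserved along the limit process: U(x(t)) = U(x(0)) for all t ∈ [0,T]. -/

import Mathlib

open MeasureTheory
open scoped RealInnerProductSpace

/-- The normalized vector field `ξ̄(x) = ξ(x)/|ξ(x)|` (junk value `0` on `𝒩 = {ξ = 0}`). -/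
noncomputable def xibar (d : ℕ) (ξ : EuclideanSpace ℝ (Fin d) → EuclideanSpace ℝ (Fin d))
    (x : EuclideanSpace ℝ (Fin d)) : EuclideanSpace ℝ (Fin d) :=
  ‖ξ x‖⁻¹ • ξ x

/-- The tangential projection `P(x)v = v − (ξ̄(x)ᵀv)ξ̄(x)`. -/
noncomputable def tangP (d : ℕ) (ξ : EuclideanSpace ℝ (Fin d) → EuclideanSpace ℝ (Fin d))
    (x v : EuclideanSpace ℝ (Fin d)) : EuclideanSpace ℝ (Fin d) :=
  v - ⟪xibar d ξ x, v⟫ • xibar d ξ x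

/-- The drift `𝐛(x,w) = −2(r²−|w|²−|x|²)·Dξ̄(x)ξ̄(x) − 2(wᵀDξ̄(x)w)·ξ̄(x)` of
the limit ODE. -/
noncomputable def limb (d : ℕ) (ξ : EuclideanSpace ℝ (Fin d) → EuclideanSpace ℝ (Fin d))
    (r : ℝ) (x w : EuclideanSpace ℝ (Fin d)) : EuclideanSpace ℝ (Fin d) :=
  (-2 * (r ^ 2 - ‖w‖ ^ 2 - ‖x‖ ^ 2)) • fderiv ℝ (xibar d ξ) x (xibar d ξ x)
    + (-2 * ⟪w, fderiv ℝ (xibar d ξ) x w⟫) • xibar d ξ x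

lemma xibar_diff {d : ℕ} {ξ : EuclideanSpace ℝ (Fin d) → EuclideanSpace ℝ (Fin d)}
    (hξ : ContDiff ℝ 2 ξ) {x0 : EuclideanSpace ℝ (Fin d)} (h : ξ x0 ≠ 0) :
    DifferentiableAt ℝ (xibar d ξ) x0 := by
  have hd : DifferentiableAt ℝ ξ x0 := (hξ.differentiable (by norm_num)).differentiableAt
  exact ((hd.norm ℝ h).inv (norm_ne_zero_iff.2 h)).smul hd

lemma xibar_inner_self {d : ℕ} {ξ : EuclideanSpace ℝ (Fin d) → EuclideanSpace ℝ (Fin d)}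
    {x0 : EuclideanSpace ℝ (Fin d)} (h : ξ x0 ≠ 0) :
    ⟪xibar d ξ x0, xibar d ξ x0⟫ = 1 := by
  have hn : ‖ξ x0‖ ≠ 0 := norm_ne_zero_iff.2 h
  rw [xibar, real_inner_smul_left, real_inner_smul_right, real_inner_self_eq_norm_sq]
  field_simp

lemma xibar_orth {d : ℕ} {ξ : EuclideanSpace ℝ (Fin d) → EuclideanSpace ℝ (Fin d)}
    (hξ : ContDiff ℝ 2 ξ) {x0 : EuclideanSpace ℝ (Fin d)} (h : ξ x0 ≠ 0)
    (v : EuclideanSpace ℝ (Fin d)) :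
    ⟪xibar d ξ x0, fderiv ℝ (xibar d ξ) x0 v⟫ = 0 := by
  set F := xibar d ξ with hF
  have hdiff : DifferentiableAt ℝ F x0 := xibar_diff hξ h
  have hfd : HasFDerivAt (fun y => ⟪F y, F y⟫)
      ((fderivInnerCLM ℝ (F x0, F x0)).comp ((fderiv ℝ F x0).prod (fderiv ℝ F x0))) x0 :=
    hdiff.hasFDerivAt.inner ℝ hdiff.hasFDerivAt
  have hopen : IsOpen {y | ξ y ≠ 0} :=
    isOpen_compl_singleton.preimage hξ.continuous
  have hev : (fun y => ⟪F y, F y⟫) =ᶠ[nhds x0] fun _ => (1 : ℝ) :=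
    Filter.eventuallyEq_of_mem (hopen.mem_nhds h) fun y hy => xibar_inner_self hy
  have h0 : HasFDerivAt (fun y => ⟪F y, F y⟫) (0 : EuclideanSpace ℝ (Fin d) →L[ℝ] ℝ) x0 :=
    (hasFDerivAt_const (1 : ℝ) x0).congr_of_eventuallyEq hev
  have huniq := hfd.unique h0
  have happ : ⟪F x0, fderiv ℝ F x0 v⟫ + ⟪fderiv ℝ F x0 v, F x0⟫ = 0 := by
    have := congrArg (fun (L : EuclideanSpace ℝ (Fin d) →L[ℝ] ℝ) => L v) huniq
    simp only [ContinuousLinearMap.comp_apply, ContinuousLinearMap.prod_apply,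
      fderivInnerCLM_apply, ContinuousLinearMap.zero_apply] at this
    exact this
  rw [real_inner_comm (fderiv ℝ F x0 v)] at happ
  rw [real_inner_comm]
  linarith

/-- Along any solution of the limit ODE `x' = 2w`, `w' = −2P(x)x + 𝐛(x,w)` staying
away from `𝒩 = {ξ = 0}` and starting tangentially (`ξ̄(x(0))ᵀw(0) = 0`), the potential
is conserved: `U(x(t)) = U(x(0))`. -/
theorem stmt_16 (d : ℕ) (U : EuclideanSpace ℝ (Fin d) → ℝ)
    (ξ : EuclideanSpace ℝ (Fin d) → EuclideanSpace ℝ (Fin d))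
    (hgrad : ∀ y, HasGradientAt U (ξ y) y) (hξ_C2 : ContDiff ℝ 2 ξ)
    (r T : ℝ) (hr : 0 < r) (hT : 0 ≤ T)
    (x w : ℝ → EuclideanSpace ℝ (Fin d))
    (hx' : ∀ t ∈ Set.Icc (0 : ℝ) T,
      HasDerivWithinAt x ((2 : ℝ) • w t) (Set.Icc (0 : ℝ) T) t)
    (hw' : ∀ t ∈ Set.Icc (0 : ℝ) T,
      HasDerivWithinAt w ((-2 : ℝ) • tangP d ξ (x t) (x t) + limb d ξ r (x t) (w t))
        (Set.Icc (0 : ℝ) T) t)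
    (hne : ∀ t ∈ Set.Icc (0 : ℝ) T, ξ (x t) ≠ 0)
    (h0 : ⟪xibar d ξ (x 0), w 0⟫ = 0) :
    ∀ t ∈ Set.Icc (0 : ℝ) T, U (x t) = U (x 0) := by
  set S := Set.Icc (0 : ℝ) T with hS
  set F := xibar d ξ with hF
  set g : ℝ → ℝ := fun t => ⟪F (x t), w t⟫ with hg
  -- g has derivative 0 within S at every point of S
  have hg0 : ∀ t ∈ S, HasDerivWithinAt g 0 S t := by
    intro t ht
    have hne' := hne t ht
    have hFd : HasFDerivAt F (fderiv ℝ F (x t)) (x t) :=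
      (xibar_diff hξ_C2 hne').hasFDerivAt
    have hcomp : HasDerivWithinAt (fun s => F (x s))
        (fderiv ℝ F (x t) ((2 : ℝ) • w t)) S t :=
      hFd.comp_hasDerivWithinAt t (hx' t ht)
    have hinner := hcomp.inner ℝ (hw' t ht)
    have hval : ⟪F (x t), (-2 : ℝ) • tangP d ξ (x t) (x t) + limb d ξ r (x t) (w t)⟫
        + ⟪fderiv ℝ F (x t) ((2 : ℝ) • w t), w t⟫ = 0 := by
      have hself : ⟪F (x t), F (x t)⟫ = 1 := xibar_inner_self hne'
      have ho1 : ⟪F (x t), fderiv ℝ F (x t) (F (x t))⟫ = 0 := xibar_orth hξ_C2 hne' _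
      have ho2 : ⟪F (x t), fderiv ℝ F (x t) (w t)⟫ = 0 := xibar_orth hξ_C2 hne' _
      have hmap : fderiv ℝ F (x t) ((2 : ℝ) • w t) = (2 : ℝ) • fderiv ℝ F (x t) (w t) :=
        (fderiv ℝ F (x t)).map_smul _ _
      rw [hmap, tangP, limb, ← hF, inner_add_right, inner_smul_right, inner_sub_right,
        inner_smul_right, inner_add_right, inner_smul_right, inner_smul_right, hself,
        ho1, real_inner_smul_left, real_inner_comm (fderiv ℝ F (x t) (w t))]
      ring
    rw [hval] at hinner
    exact hinner
  -- hence g is constant, equal to g 0 = 0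
  have hgconst : ∀ t ∈ S, g t = 0 := by
    have := constant_of_has_deriv_right_zero (f := g) (a := 0) (b := T)
      (fun t ht => (hg0 t ht).continuousWithinAt)
      (fun t ht => (hg0 t (Set.Ico_subset_Icc_self ht)).mono_of_mem_nhdsWithin
        (Icc_mem_nhdsGE_of_mem ht))
    intro t ht
    rw [this t ht]
    exact h0
  -- now U ∘ x has derivative 0 within S
  have hU0 : ∀ t ∈ S, HasDerivWithinAt (fun s => U (x s)) 0 S t := by
    intro t ht
    have hfd : HasFDerivAt U (InnerProductSpace.toDual ℝ _ (ξ (x t))) (x t) :=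
      (hgrad (x t)).hasFDerivAt
    have hcomp := hfd.comp_hasDerivWithinAt t (hx' t ht)
    have hval : (InnerProductSpace.toDual ℝ (EuclideanSpace ℝ (Fin d)) (ξ (x t)))
        ((2 : ℝ) • w t) = 0 := by
      have hn : ‖ξ (x t)‖ ≠ 0 := norm_ne_zero_iff.2 (hne t ht)
      have hgt : ⟪F (x t), w t⟫ = 0 := hgconst t ht
      rw [hF, xibar, real_inner_smul_left] at hgt
      have hxi : ⟪ξ (x t), w t⟫ = 0 := by
        rcases mul_eq_zero.1 hgt with h | h
        · exact absurd h (inv_ne_zero hn)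
        · exact h
      rw [InnerProductSpace.toDual_apply_apply, inner_smul_right, hxi, mul_zero]
    rw [hval] at hcomp
    exact hcomp
  exact constant_of_has_deriv_right_zero
    (fun t ht => (hU0 t ht).continuousWithinAt)
    (fun t ht => (hU0 t (Set.Ico_subset_Icc_self ht)).mono_of_mem_nhdsWithin
      (Icc_mem_nhdsGE_of_mem ht))
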